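/- (Finite-class uniform deviation of the PU multicalibration estimator.) Let 𝒞 be a nonempty finite set of measurable functions c : 𝒳 → [−1,1], 𝒲 a nonempty finite set of measurable functions w : [0,1] → [−1,1], f : 𝒳 → [0,1] measurable, n₊, n_u ≥ 1, and δ ∈ (0,1). For s⁺ ∈ 𝒳^{n₊}, s^u ∈ 𝒳^{n_u} define Ĥ_{c,w}(s⁺, s^u) := (π₊/n₊)·Σ_{i=1}^{n₊} c(s⁺_i)·w(f(s⁺_i)) − (1/n_u)·Σ_{j=1}^{n_u} c(s^u_j)·w(f(s^u_j))·f(s^u_j). Then under the product measure P₊^{⊗ n₊} ⊗ P_X^{⊗ n_u}, with probability at least 1 − δ, max_{c ∈ 𝒞, w ∈ 𝒲} |Ĥ_{c,w}(s⁺, s^u) − R_{c,w}(f)| ≤ π₊·√(2·log(4·|𝒞|·|𝒲|/δ)/n₊) + √(2·log(4·|𝒞|·|𝒲|/δ)/n_u); in particular, |max_{c,w}|Ĥ_{c,w}| − max_{c,w}|R_{c,w}(f)|| is bounded by the same quantity. -/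

import Mathlib

open MeasureTheory Real

lemma pu_D_pos {m : ℝ} (hm : |m| ≤ 1) (t : ℝ) : 0 < Real.cosh t + m * Real.sinh t := by
  have h1 : |Real.sinh t| < Real.cosh t := by
    have := Real.cosh_sq_sub_sinh_sq t
    have h0 : (0:ℝ) < Real.cosh t := Real.cosh_pos t
    nlinarith [abs_nonneg (Real.sinh t), sq_abs (Real.sinh t)]
  have : |m * Real.sinh t| ≤ |Real.sinh t| := by
    rw [abs_mul]
    calc |m| * |Real.sinh t| ≤ 1 * |Real.sinh t| :=
      mul_le_mul_of_nonneg_right hm (abs_nonneg _)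
      _ = |Real.sinh t| := one_mul _
  have := neg_abs_le (m * Real.sinh t)
  linarith [this, h1, neg_le_neg ‹|m * Real.sinh t| ≤ |Real.sinh t|›]

lemma pu_hoeffding_log {m : ℝ} (hm : |m| ≤ 1) (t : ℝ) :
    Real.exp (-(t * m)) * (Real.cosh t + m * Real.sinh t) ≤ Real.exp (t ^ 2 / 2) := by
  set D : ℝ → ℝ := fun t => Real.cosh t + m * Real.sinh t with hDdef
  set D' : ℝ → ℝ := fun t => Real.sinh t + m * Real.cosh t with hD'def
  have hD : ∀ t, 0 < D t := pu_D_pos hm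
  have hDd : ∀ t, HasDerivAt D (D' t) t := fun t =>
    (Real.hasDerivAt_cosh t).add ((Real.hasDerivAt_sinh t).const_mul m)
  have hD'd : ∀ t, HasDerivAt D' (D t) t := fun t =>
    (Real.hasDerivAt_sinh t).add ((Real.hasDerivAt_cosh t).const_mul m)
  set G : ℝ → ℝ := fun t => t + m - D' t / D t with hGdef
  have hGd : ∀ t, HasDerivAt G ((D' t / D t) ^ 2) t := by
    intro t
    have hdiv : HasDerivAt (fun t => D' t / D t)
        ((D t * D t - D' t * D' t) / D t ^ 2) t :=
      (hD'd t).div (hDd t) (hD t).ne'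
    have h := ((hasDerivAt_id t).add_const m).sub hdiv
    refine h.congr_deriv ?_
    have : D t ≠ 0 := (hD t).ne'
    rw [div_pow, eq_div_iff (pow_ne_zero 2 this), sub_mul, div_mul_cancel₀ _ (pow_ne_zero 2 this)]
    ring
  have hGmono : Monotone G := by
    refine monotone_of_deriv_nonneg (fun t => (hGd t).differentiableAt) ?_
    intro t
    rw [(hGd t).deriv]
    positivity
  have hG0 : G 0 = 0 := by simp [hGdef, hD'def, hDdef]
  set φ : ℝ → ℝ := fun t => t ^ 2 / 2 + t * m - Real.log (D t) with hφdef
  have hφd : ∀ t, HasDerivAt φ (G t) t := by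
    intro t
    have h1 : HasDerivAt (fun t : ℝ => t ^ 2 / 2 + t * m) (t + m) t := by
      have := ((hasDerivAt_pow 2 t).div_const 2).add ((hasDerivAt_id t).mul_const m)
      refine this.congr_deriv ?_
      norm_num
    have h2 : HasDerivAt (fun t => Real.log (D t)) (D' t / D t) t :=
      (hDd t).log (hD t).ne'
    exact h1.sub h2
  have hφ0 : φ 0 = 0 := by simp [hφdef, hDdef]
  have hφcont : Continuous φ := by
    have : Differentiable ℝ φ := fun t => (hφd t).differentiableAt
    exact this.continuous
  have hφnonneg : ∀ t, 0 ≤ φ t := by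
    intro t
    rcases le_total 0 t with ht | ht
    · have hmono : MonotoneOn φ (Set.Ici (0:ℝ)) := by
        refine monotoneOn_of_deriv_nonneg (convex_Ici 0) hφcont.continuousOn
          (fun x _ => (hφd x).differentiableAt.differentiableWithinAt) ?_
        intro x hx
        rw [(hφd x).deriv]
        rw [interior_Ici] at hx
        have := hGmono (le_of_lt hx)
        rw [hG0] at this
        exact this
      have := hmono Set.self_mem_Ici ht ht
      rwa [hφ0] at this
    · have hanti : AntitoneOn φ (Set.Iic (0:ℝ)) := by
        refine antitoneOn_of_deriv_nonpos (convex_Iic 0) hφcont.continuousOn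
          (fun x _ => (hφd x).differentiableAt.differentiableWithinAt) ?_
        intro x hx
        rw [(hφd x).deriv]
        rw [interior_Iic] at hx
        have := hGmono (le_of_lt hx)
        rw [hG0] at this
        exact this
      have := hanti ht Set.self_mem_Iic ht
      rwa [hφ0] at this
  -- conclude
  have h := hφnonneg t
  have hDt := hD t
  have : Real.exp (-(t * m)) * D t = Real.exp (-(t * m) + Real.log (D t)) := by
    rw [Real.exp_add, Real.exp_log hDt]
  calc Real.exp (-(t * m)) * (Real.cosh t + m * Real.sinh t)
      = Real.exp (-(t * m) + Real.log (D t)) := this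
    _ ≤ Real.exp (t ^ 2 / 2) := by
        apply Real.exp_le_exp.2
        have hphi : φ t = t ^ 2 / 2 + t * m - Real.log (D t) := rfl
        rw [hphi] at h
        linarith

open MeasureTheory Real

lemma pu_exp_le {x : ℝ} (t : ℝ) (hx : |x| ≤ 1) :
    Real.exp (t * x) ≤ Real.cosh t + x * Real.sinh t := by
  have h1 : (0:ℝ) ≤ (1 + x) / 2 := by cases abs_le.1 hx; linarith
  have h2 : (0:ℝ) ≤ (1 - x) / 2 := by cases abs_le.1 hx; linarith
  have h3 : (1 + x) / 2 + (1 - x) / 2 = 1 := by ring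
  have := convexOn_exp.2 (Set.mem_univ t) (Set.mem_univ (-t)) h1 h2 h3
  simp only [smul_eq_mul] at this
  have he : (1 + x) / 2 * t + (1 - x) / 2 * (-t) = t * x := by ring
  rw [he] at this
  calc Real.exp (t * x) ≤ (1 + x) / 2 * Real.exp t + (1 - x) / 2 * Real.exp (-t) := this
    _ = Real.cosh t + x * Real.sinh t := by
        rw [Real.cosh_eq, Real.sinh_eq]; ring

lemma pu_integrable_of_bdd {Ω : Type*} [MeasurableSpace Ω] (P : Measure Ω) [IsFiniteMeasure P]
    {g : Ω → ℝ} (hg : Measurable g) {c : ℝ} (hb : ∀ x, |g x| ≤ c) : Integrable g P :=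
  ⟨hg.aestronglyMeasurable, HasFiniteIntegral.of_bounded (C := c) (ae_of_all _ hb)⟩

lemma pu_mean_abs_le {Ω : Type*} [MeasurableSpace Ω] (P : Measure Ω) [IsProbabilityMeasure P]
    {g : Ω → ℝ} (hb : ∀ x, |g x| ≤ 1) : |∫ x, g x ∂P| ≤ 1 := by
  have := norm_integral_le_of_norm_le_const (μ := P) (C := 1) (f := g)
    (ae_of_all _ fun x => by rw [Real.norm_eq_abs]; exact hb x)
  simpa [Real.norm_eq_abs, measure_univ] using this

lemma pu_mgf_single {Ω : Type*} [MeasurableSpace Ω] (P : Measure Ω) [IsProbabilityMeasure P]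
    {g : Ω → ℝ} (hg : Measurable g) (hb : ∀ x, |g x| ≤ 1) (t : ℝ) :
    ∫ x, Real.exp (t * (g x - ∫ y, g y ∂P)) ∂P ≤ Real.exp (t ^ 2 / 2) := by
  set m := ∫ y, g y ∂P with hm
  have hmabs : |m| ≤ 1 := pu_mean_abs_le P hb
  have hint_exp : Integrable (fun x => Real.exp (t * g x)) P := by
    refine pu_integrable_of_bdd P (by measurability) (c := Real.exp |t|) fun x => ?_
    rw [abs_of_pos (Real.exp_pos _)]
    apply Real.exp_le_exp.2
    calc t * g x ≤ |t * g x| := le_abs_self _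
      _ = |t| * |g x| := abs_mul _ _
      _ ≤ |t| * 1 := mul_le_mul_of_nonneg_left (hb x) (abs_nonneg t)
      _ = |t| := mul_one _
  have hint_g : Integrable g P := pu_integrable_of_bdd P hg hb
  have step1 : ∫ x, Real.exp (t * g x) ∂P ≤ Real.cosh t + m * Real.sinh t := by
    have hle : ∀ x, Real.exp (t * g x) ≤ Real.cosh t + g x * Real.sinh t :=
      fun x => pu_exp_le t (hb x)
    have hint2 : Integrable (fun x => Real.cosh t + g x * Real.sinh t) P :=
      (integrable_const _).add (hint_g.mul_const _)
    calc ∫ x, Real.exp (t * g x) ∂P ≤ ∫ x, (Real.cosh t + g x * Real.sinh t) ∂P :=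
          integral_mono hint_exp hint2 hle
      _ = Real.cosh t + m * Real.sinh t := by
          rw [integral_add (integrable_const _) (hint_g.mul_const _),
            integral_const, integral_mul_const]
          simp [measure_univ]
          exact Or.inl hm.symm
  have heq : ∫ x, Real.exp (t * (g x - m)) ∂P
      = Real.exp (-(t * m)) * ∫ x, Real.exp (t * g x) ∂P := by
    have : ∀ x, Real.exp (t * (g x - m)) = Real.exp (-(t * m)) * Real.exp (t * g x) := by
      intro x; rw [← Real.exp_add]; ring_nf
    simp_rw [this]
    exact integral_const_mul _ _
  rw [heq]
  calc Real.exp (-(t * m)) * ∫ x, Real.exp (t * g x) ∂P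
      ≤ Real.exp (-(t * m)) * (Real.cosh t + m * Real.sinh t) := by
        apply mul_le_mul_of_nonneg_left step1 (Real.exp_pos _).le
    _ ≤ Real.exp (t ^ 2 / 2) := pu_hoeffding_log hmabs t
open MeasureTheory Real

lemma pu_integral_pi_prod {Ω : Type*} [MeasurableSpace Ω] (P : Measure Ω) [IsProbabilityMeasure P]
    (n : ℕ) (g : Ω → ℝ) :
    ∫ s : Fin n → Ω, ∏ i, g (s i) ∂(Measure.pi fun _ => P) = (∫ x, g x ∂P) ^ n := by
  letI : MeasureSpace Ω := ⟨P⟩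
  haveI : SigmaFinite (volume : Measure Ω) := inferInstanceAs (SigmaFinite P)
  have h := MeasureTheory.integral_fintype_prod_eq_pow (ι := Fin n) (μ := P) g
  simpa using h

lemma pu_S_bdd {Ω : Type*} [MeasurableSpace Ω] {g : Ω → ℝ} (hb : ∀ x, |g x| ≤ 1)
    {m : ℝ} (hm : |m| ≤ 1) {n : ℕ} (s : Fin n → Ω) :
    |∑ i, (g (s i) - m)| ≤ 2 * n := by
  calc |∑ i, (g (s i) - m)| ≤ ∑ i, |g (s i) - m| := Finset.abs_sum_le_sum_abs _ _
    _ ≤ ∑ _i : Fin n, (2:ℝ) := Finset.sum_le_sum fun i _ =>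
        (abs_sub _ _).trans (by linarith [hb (s i), hm])
    _ = 2 * n := by simp [mul_comm]

lemma pu_chernoff_one {Ω : Type*} [MeasurableSpace Ω] (P : Measure Ω) [IsProbabilityMeasure P]
    {n : ℕ} (hn : 1 ≤ n) {g : Ω → ℝ} (hg : Measurable g) (hb : ∀ x, |g x| ≤ 1)
    {ε : ℝ} (hε : 0 ≤ ε) :
    (Measure.pi fun _ : Fin n => P) {s | ε ≤ (1 / n) * (∑ i, g (s i)) - ∫ x, g x ∂P}
      ≤ ENNReal.ofReal (Real.exp (-(n * ε ^ 2) / 2)) := by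
  set m := ∫ x, g x ∂P with hmdef
  have hmabs : |m| ≤ 1 := pu_mean_abs_le P hb
  set Q := (Measure.pi fun _ : Fin n => P) with hQ
  set S : (Fin n → Ω) → ℝ := fun s => ∑ i, (g (s i) - m) with hS
  have hnpos : (0:ℝ) < n := by exact_mod_cast hn
  have hSmeas : Measurable S :=
    Finset.measurable_sum _ fun i _ => (hg.comp (measurable_pi_apply i)).sub measurable_const
  have hset : {s : Fin n → Ω | ε ≤ (1 / n) * (∑ i, g (s i)) - m} = {s | (n:ℝ) * ε ≤ S s} := by
    ext s
    simp only [Set.mem_setOf_eq, hS, Finset.sum_sub_distrib, Finset.sum_const,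
      Finset.card_univ, Fintype.card_fin, nsmul_eq_mul]
    set A := ∑ i, g (s i) with hA
    constructor
    · intro h
      have heq : (n:ℝ) * (1 / n * A - m) = A - n * m := by field_simp
      linarith [mul_le_mul_of_nonneg_left h hnpos.le]
    · intro h
      have heq : ((n:ℝ))⁻¹ * (A - n * m) = 1 / n * A - m := by field_simp
      have h2 := mul_le_mul_of_nonneg_left h (inv_nonneg.2 hnpos.le)
      have heq2 : ((n:ℝ))⁻¹ * (n * ε) = ε := by field_simp
      linarith
  have hint : Integrable (fun s => Real.exp (ε * S s)) Q := by
    refine pu_integrable_of_bdd Q (by measurability) (c := Real.exp (ε * (2 * n))) fun s => ?_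
    rw [abs_of_pos (Real.exp_pos _)]
    apply Real.exp_le_exp.2
    calc ε * S s ≤ ε * |S s| := mul_le_mul_of_nonneg_left (le_abs_self _) hε
      _ ≤ ε * (2 * n) := mul_le_mul_of_nonneg_left (pu_S_bdd hb hmabs s) hε
  have hmgf : ProbabilityTheory.mgf S Q ε ≤ Real.exp ((n:ℝ) * ε ^ 2 / 2) := by
    have hprod : ∀ s : Fin n → Ω, Real.exp (ε * S s)
        = ∏ i, Real.exp (ε * (g (s i) - m)) := by
      intro s
      rw [← Real.exp_sum]
      congr 1
      rw [hS, Finset.mul_sum]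
    calc ProbabilityTheory.mgf S Q ε = ∫ s, Real.exp (ε * S s) ∂Q := rfl
      _ = ∫ s, ∏ i, Real.exp (ε * (g (s i) - m)) ∂Q := by simp_rw [hprod]
      _ = (∫ x, Real.exp (ε * (g x - m)) ∂P) ^ n := by
          rw [hQ]; exact pu_integral_pi_prod P n (fun x => Real.exp (ε * (g x - m)))
      _ ≤ (Real.exp (ε ^ 2 / 2)) ^ n := by
          apply pow_le_pow_left₀ (integral_nonneg fun x => (Real.exp_pos _).le)
          exact pu_mgf_single P hg hb ε
      _ = Real.exp ((n:ℝ) * ε ^ 2 / 2) := by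
          rw [← Real.exp_nat_mul]; ring_nf
  have hcher := ProbabilityTheory.measure_ge_le_exp_mul_mgf (X := S) (μ := Q)
    ((n:ℝ) * ε) hε hint
  rw [hset]
  rw [ENNReal.le_ofReal_iff_toReal_le (measure_ne_top _ _) (Real.exp_pos _).le]
  calc (Q {s | (n:ℝ) * ε ≤ S s}).toReal
      ≤ Real.exp (-ε * ((n:ℝ) * ε)) * ProbabilityTheory.mgf S Q ε := hcher
    _ ≤ Real.exp (-ε * ((n:ℝ) * ε)) * Real.exp ((n:ℝ) * ε ^ 2 / 2) := by
        exact mul_le_mul_of_nonneg_left hmgf (Real.exp_pos _).le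
    _ = Real.exp (-((n:ℝ) * ε ^ 2) / 2) := by
        rw [← Real.exp_add]; ring_nf

lemma pu_chernoff_abs {Ω : Type*} [MeasurableSpace Ω] (P : Measure Ω) [IsProbabilityMeasure P]
    {n : ℕ} (hn : 1 ≤ n) {g : Ω → ℝ} (hg : Measurable g) (hb : ∀ x, |g x| ≤ 1)
    {ε : ℝ} (hε : 0 ≤ ε) :
    (Measure.pi fun _ : Fin n => P) {s | ε < |(1 / n) * (∑ i, g (s i)) - ∫ x, g x ∂P|}
      ≤ ENNReal.ofReal (2 * Real.exp (-(n * ε ^ 2) / 2)) := by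
  set D : (Fin n → Ω) → ℝ := fun s => (1 / n) * (∑ i, g (s i)) - ∫ x, g x ∂P with hD
  have hsub : {s : Fin n → Ω | ε < |D s|}
      ⊆ {s | ε ≤ D s} ∪ {s | ε ≤ -D s} := by
    intro s hs
    simp only [Set.mem_setOf_eq] at hs
    rcases lt_abs.1 hs with h1 | h1
    · left; exact le_of_lt h1
    · right; exact le_of_lt (by simpa using h1)
  have hneg : {s : Fin n → Ω | ε ≤ -D s}
      = {s | ε ≤ (1 / n) * (∑ i, (fun x => -g x) (s i)) - ∫ x, (fun x => -g x) x ∂P} := by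
    ext s
    simp only [Set.mem_setOf_eq, hD]
    rw [integral_neg]
    constructor <;> intro h <;> · simp only [Finset.sum_neg_distrib] at * ; linarith
  calc (Measure.pi fun _ : Fin n => P) {s | ε < |D s|}
      ≤ (Measure.pi fun _ : Fin n => P) ({s | ε ≤ D s} ∪ {s | ε ≤ -D s}) :=
        measure_mono hsub
    _ ≤ (Measure.pi fun _ : Fin n => P) {s | ε ≤ D s}
        + (Measure.pi fun _ : Fin n => P) {s | ε ≤ -D s} := measure_union_le _ _
    _ ≤ ENNReal.ofReal (Real.exp (-(n * ε ^ 2) / 2)) + ENNReal.ofReal (Real.exp (-(n * ε ^ 2) / 2)) := by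
        gcongr
        · exact pu_chernoff_one P hn hg hb hε
        · rw [hneg]
          exact pu_chernoff_one P hn (hg.neg) (fun x => by simpa using hb x) hε
    _ = ENNReal.ofReal (2 * Real.exp (-(n * ε ^ 2) / 2)) := by
        rw [← ENNReal.ofReal_add (Real.exp_pos _).le (Real.exp_pos _).le]
        ring_nf
open MeasureTheory Real

lemma pu_prod_fst_meas {α β : Type*} [MeasurableSpace α] [MeasurableSpace β]
    (μ : Measure α) (ν : Measure β) [SFinite μ] [IsProbabilityMeasure ν] (A : Set α) :
    (μ.prod ν) (Prod.fst ⁻¹' A) = μ A := by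
  rw [← Set.prod_univ, Measure.prod_prod, measure_univ, mul_one]

lemma pu_prod_snd_meas {α β : Type*} [MeasurableSpace α] [MeasurableSpace β]
    (μ : Measure α) (ν : Measure β) [IsProbabilityMeasure μ] [SFinite ν] (A : Set β) :
    (μ.prod ν) (Prod.snd ⁻¹' A) = ν A := by
  rw [← Set.univ_prod, Measure.prod_prod, measure_univ, one_mul]

lemma pu_union_sum {Ω : Type*} [MeasurableSpace Ω] (Q : Measure Ω) {ι : Type*}
    (F : Finset ι) (B : ι → Set Ω) (bnd : ENNReal)
    (h : ∀ p ∈ F, Q (B p) ≤ bnd) :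
    Q (⋃ p ∈ F, B p) ≤ F.card • bnd := by
  calc Q (⋃ p ∈ F, B p) ≤ ∑ p ∈ F, Q (B p) := measure_biUnion_finset_le F B
    _ ≤ ∑ _p ∈ F, bnd := Finset.sum_le_sum h
    _ = F.card • bnd := Finset.sum_const _

lemma pu_arith1 {a b d : ℝ} (ha : 1 ≤ a) (hb : 1 ≤ b) :
    2 * (d / (4 * a * b)) = d / (2 * (a * b)) := by
  have ha0 : a ≠ 0 := by linarith
  have hb0 : b ≠ 0 := by linarith
  field_simp
  ring

lemma pu_arith2 {a b d : ℝ} (ha : 1 ≤ a) (hb : 1 ≤ b) (hd : 0 ≤ d) :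
    ENNReal.ofReal (d / (2 * (a * b))) + ENNReal.ofReal (d / (2 * (a * b)))
      = ENNReal.ofReal (d / (a * b)) := by
  have ha0 : (0:ℝ) < a := by linarith
  have hb0 : (0:ℝ) < b := by linarith
  have h2 : (0:ℝ) ≤ d / (2 * (a * b)) := by positivity
  rw [← ENNReal.ofReal_add h2 h2]
  congr 1
  have ha' : a ≠ 0 := ha0.ne'
  have hb' : b ≠ 0 := hb0.ne'
  field_simp
  ring

lemma pu_arith3 {n m : ℕ} {d : ℝ} (hn : 1 ≤ n) (hm : 1 ≤ m) (hd : 0 ≤ d) :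
    (n * m) • ENNReal.ofReal (d / ((n:ℝ) * (m:ℝ))) = ENNReal.ofReal d := by
  have hn0 : (0:ℝ) < (n:ℝ) := by exact_mod_cast hn
  have hm0 : (0:ℝ) < (m:ℝ) := by exact_mod_cast hm
  rw [nsmul_eq_mul, ← ENNReal.ofReal_natCast, ← ENNReal.ofReal_mul (by positivity)]
  congr 1
  push_cast
  rw [mul_div_cancel₀]
  positivity

lemma pu_one_sub_le {δ : ℝ} (hδ0 : 0 < δ) (hδ1 : δ < 1) {Ω : Type*} [MeasurableSpace Ω]
    (Q : Measure Ω) [IsProbabilityMeasure Q] {G T : Set Ω} (hGmeas : MeasurableSet G)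
    (hsub : G ⊆ T) (hcompl : Q Gᶜ ≤ ENNReal.ofReal δ) :
    ENNReal.ofReal (1 - δ) ≤ Q T := by
  refine le_trans ?_ (measure_mono hsub)
  have h1 : Q G + Q Gᶜ = 1 := by
    rw [measure_add_measure_compl hGmeas, measure_univ]
  have h2 : ENNReal.ofReal (1 - δ) + ENNReal.ofReal δ = 1 := by
    rw [← ENNReal.ofReal_add (by linarith) (by linarith)]
    norm_num
  have h3 : ENNReal.ofReal (1 - δ) + ENNReal.ofReal δ ≤ Q G + ENNReal.ofReal δ := by
    rw [h2, ← h1]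
    exact add_le_add le_rfl hcompl
  exact ENNReal.le_of_add_le_add_right ENNReal.ofReal_ne_top h3
open MeasureTheory Real

lemma pu_abs_sup_sub_le {α : Type*} {F : Finset α} (hF : F.Nonempty) (f g : α → ℝ) {b : ℝ}
    (h : ∀ a ∈ F, |f a - g a| ≤ b) :
    |F.sup' hF f - F.sup' hF g| ≤ b := by
  rw [abs_sub_le_iff]
  constructor
  · rw [sub_le_iff_le_add]
    apply Finset.sup'_le
    intro a ha
    have h1 := (abs_sub_le_iff.1 (h a ha)).1
    have h2 := Finset.le_sup' g ha
    linarith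
  · rw [sub_le_iff_le_add]
    apply Finset.sup'_le
    intro a ha
    have h1 := (abs_sub_le_iff.1 (h a ha)).2
    have h2 := Finset.le_sup' f ha
    linarith

set_option maxHeartbeats 1000000 in
theorem pu_finite_class_uniform_deviation {X : Type*} [MeasurableSpace X]
    (Pp Pm : Measure X) [IsProbabilityMeasure Pp] [IsProbabilityMeasure Pm]
    (pip : ℝ) (hpi : pip ∈ Set.Icc (0:ℝ) 1)
    (C : Finset (X → ℝ)) (W : Finset (ℝ → ℝ))
    (hCne : C.Nonempty) (hWne : W.Nonempty)
    (hC : ∀ c ∈ C, Measurable c ∧ ∀ x, c x ∈ Set.Icc (-1:ℝ) 1)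
    (hW : ∀ w ∈ W, Measurable w ∧ ∀ v ∈ Set.Icc (0:ℝ) 1, w v ∈ Set.Icc (-1:ℝ) 1)
    (f : X → ℝ) (hf : Measurable f) (hf01 : ∀ x, f x ∈ Set.Icc (0:ℝ) 1)
    (np nu : ℕ) (hnp : 1 ≤ np) (hnu : 1 ≤ nu)
    (δ : ℝ) (hδ : δ ∈ Set.Ioo (0:ℝ) 1) :
    ENNReal.ofReal (1 - δ) ≤
      ((Measure.pi fun _ : Fin np => Pp).prod
        (Measure.pi fun _ : Fin nu =>
          ENNReal.ofReal pip • Pp + ENNReal.ofReal (1 - pip) • Pm))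
      {s : (Fin np → X) × (Fin nu → X) |
        (∀ c ∈ C, ∀ w ∈ W,
          |(pip / np * ∑ i, c (s.1 i) * w (f (s.1 i))
              - (1 / nu) * ∑ j, c (s.2 j) * w (f (s.2 j)) * f (s.2 j))
            - (pip * ∫ x, c x * w (f x) * (1 - f x) ∂Pp
              - (1 - pip) * ∫ x, c x * w (f x) * f x ∂Pm)|
          ≤ pip * Real.sqrt (2 * Real.log (4 * (C.card : ℝ) * (W.card : ℝ) / δ) / np)
            + Real.sqrt (2 * Real.log (4 * (C.card : ℝ) * (W.card : ℝ) / δ) / nu))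
        ∧
        |((C ×ˢ W).sup' (hCne.product hWne) fun p =>
            |pip / np * ∑ i, p.1 (s.1 i) * p.2 (f (s.1 i))
              - (1 / nu) * ∑ j, p.1 (s.2 j) * p.2 (f (s.2 j)) * f (s.2 j)|)
          - ((C ×ˢ W).sup' (hCne.product hWne) fun p =>
            |pip * ∫ x, p.1 x * p.2 (f x) * (1 - f x) ∂Pp
              - (1 - pip) * ∫ x, p.1 x * p.2 (f x) * f x ∂Pm|)|
        ≤ pip * Real.sqrt (2 * Real.log (4 * (C.card : ℝ) * (W.card : ℝ) / δ) / np)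
          + Real.sqrt (2 * Real.log (4 * (C.card : ℝ) * (W.card : ℝ) / δ) / nu) } := by
  obtain ⟨hpi0, hpi1⟩ := hpi
  obtain ⟨hδ0, hδ1⟩ := hδ
  set L : ℝ := Real.log (4 * (C.card : ℝ) * (W.card : ℝ) / δ) with hLdef
  set εp : ℝ := Real.sqrt (2 * L / np) with hεpdef
  set εu : ℝ := Real.sqrt (2 * L / nu) with hεudef
  have hCcard : (1:ℝ) ≤ (C.card : ℝ) := by exact_mod_cast hCne.card_pos
  have hWcard : (1:ℝ) ≤ (W.card : ℝ) := by exact_mod_cast hWne.card_pos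
  have hKpos : (0:ℝ) < 4 * (C.card : ℝ) * (W.card : ℝ) / δ := by positivity
  have hKge1 : (1:ℝ) ≤ 4 * (C.card : ℝ) * (W.card : ℝ) / δ := by
    rw [le_div_iff₀ hδ0]
    nlinarith
  have hL0 : 0 ≤ L := Real.log_nonneg hKge1
  have hnp0 : (0:ℝ) < (np : ℝ) := by exact_mod_cast hnp
  have hnu0 : (0:ℝ) < (nu : ℝ) := by exact_mod_cast hnu
  have hεp0 : 0 ≤ εp := Real.sqrt_nonneg _
  have hεu0 : 0 ≤ εu := Real.sqrt_nonneg _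
  set Pu : Measure X := ENNReal.ofReal pip • Pp + ENNReal.ofReal (1 - pip) • Pm with hPudef
  haveI hPuprob : IsProbabilityMeasure Pu := by
    constructor
    rw [hPudef]
    simp only [Measure.add_apply, Measure.smul_apply, measure_univ, smul_eq_mul, mul_one]
    rw [← ENNReal.ofReal_add hpi0 (by linarith)]
    norm_num
  set Qp : Measure (Fin np → X) := Measure.pi fun _ => Pp with hQpdef
  set Qu : Measure (Fin nu → X) := Measure.pi fun _ => Pu with hQudef
  set Q : Measure ((Fin np → X) × (Fin nu → X)) := Qp.prod Qu with hQdef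
  haveI hQpprob : IsProbabilityMeasure Qp :=
    inferInstanceAs (IsProbabilityMeasure (Measure.pi fun _ : Fin np => Pp))
  haveI hQuprob : IsProbabilityMeasure Qu :=
    inferInstanceAs (IsProbabilityMeasure (Measure.pi fun _ : Fin nu => Pu))
  haveI hQprob : IsProbabilityMeasure Q :=
    inferInstanceAs (IsProbabilityMeasure (Qp.prod Qu))
  have hexp : ∀ (n : ℕ), (0:ℝ) < n →
      Real.exp (-((n:ℝ) * Real.sqrt (2 * L / n) ^ 2) / 2)
        = δ / (4 * (C.card : ℝ) * (W.card : ℝ)) := by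
    intro n hn
    rw [Real.sq_sqrt (by positivity)]
    have : -((n:ℝ) * (2 * L / n)) / 2 = -L := by field_simp
    rw [this, hLdef, Real.exp_neg, Real.exp_log hKpos]
    rw [inv_div]
  have hgb : ∀ c ∈ C, ∀ w ∈ W, ∀ x : X, |c x * w (f x)| ≤ 1 := by
    intro c hc w hw x
    have h1 := (hC c hc).2 x
    have h2 := (hW w hw).2 (f x) (hf01 x)
    rw [abs_mul]
    have ha1 : |c x| ≤ 1 := abs_le.2 ⟨h1.1, h1.2⟩
    have ha2 : |w (f x)| ≤ 1 := abs_le.2 ⟨h2.1, h2.2⟩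
    calc |c x| * |w (f x)| ≤ 1 * 1 :=
          mul_le_mul ha1 ha2 (abs_nonneg _) (by norm_num)
      _ = 1 := by norm_num
  have hhb : ∀ c ∈ C, ∀ w ∈ W, ∀ x : X, |c x * w (f x) * f x| ≤ 1 := by
    intro c hc w hw x
    rw [abs_mul]
    have h1 := hgb c hc w hw x
    have h2 := hf01 x
    have h3 : |f x| ≤ 1 := abs_le.2 ⟨by linarith [h2.1], h2.2⟩
    calc |c x * w (f x)| * |f x| ≤ 1 * 1 :=
          mul_le_mul h1 h3 (abs_nonneg _) (by norm_num)
      _ = 1 := by norm_num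
  have hgmeas : ∀ c ∈ C, ∀ w ∈ W, Measurable fun x => c x * w (f x) := by
    intro c hc w hw
    exact (hC c hc).1.mul ((hW w hw).1.comp hf)
  have hhmeas : ∀ c ∈ C, ∀ w ∈ W, Measurable fun x => c x * w (f x) * f x := by
    intro c hc w hw
    exact (hgmeas c hc w hw).mul hf
  set A1 : (X → ℝ) → (ℝ → ℝ) → Set (Fin np → X) := fun c w =>
    {a | |(1 / (np:ℝ)) * (∑ i, c (a i) * w (f (a i))) - ∫ x, c x * w (f x) ∂Pp| ≤ εp}
    with hA1def
  set A2 : (X → ℝ) → (ℝ → ℝ) → Set (Fin nu → X) := fun c w =>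
    {b | |(1 / (nu:ℝ)) * (∑ j, c (b j) * w (f (b j)) * f (b j))
        - ∫ x, c x * w (f x) * f x ∂Pu| ≤ εu} with hA2def
  have hA1meas : ∀ c ∈ C, ∀ w ∈ W, MeasurableSet (A1 c w) := by
    intro c hc w hw
    have hm : Measurable fun a : Fin np → X =>
        |(1 / (np:ℝ)) * (∑ i, c (a i) * w (f (a i))) - ∫ x, c x * w (f x) ∂Pp| := by
      apply Measurable.abs
      apply Measurable.sub _ measurable_const
      apply Measurable.const_mul
      exact Finset.measurable_sum _ fun i _ => (hgmeas c hc w hw).comp (measurable_pi_apply i)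
    exact measurableSet_le hm measurable_const
  have hA2meas : ∀ c ∈ C, ∀ w ∈ W, MeasurableSet (A2 c w) := by
    intro c hc w hw
    have hm : Measurable fun b : Fin nu → X =>
        |(1 / (nu:ℝ)) * (∑ j, c (b j) * w (f (b j)) * f (b j))
          - ∫ x, c x * w (f x) * f x ∂Pu| := by
      apply Measurable.abs
      apply Measurable.sub _ measurable_const
      apply Measurable.const_mul
      exact Finset.measurable_sum _ fun j _ => (hhmeas c hc w hw).comp (measurable_pi_apply j)
    exact measurableSet_le hm measurable_const
  set G : Set ((Fin np → X) × (Fin nu → X)) :=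
    ⋂ p ∈ (C ×ˢ W : Finset ((X → ℝ) × (ℝ → ℝ))),
      ((Prod.fst : (Fin np → X) × (Fin nu → X) → (Fin np → X)) ⁻¹' A1 p.1 p.2
        ∩ (Prod.snd : (Fin np → X) × (Fin nu → X) → (Fin nu → X)) ⁻¹' A2 p.1 p.2) with hGdef
  have hGmeas : MeasurableSet G := by
    apply MeasurableSet.biInter (C ×ˢ W).countable_toSet
    intro p hp
    obtain ⟨hp1, hp2⟩ := Finset.mem_product.1 hp
    exact ((hA1meas p.1 hp1 p.2 hp2).preimage measurable_fst).inter
      ((hA2meas p.1 hp1 p.2 hp2).preimage measurable_snd)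
  -- union bound
  have hbound : ∀ p ∈ (C ×ˢ W : Finset ((X → ℝ) × (ℝ → ℝ))),
      Q (((Prod.fst : (Fin np → X) × (Fin nu → X) → (Fin np → X)) ⁻¹' A1 p.1 p.2)ᶜ
        ∪ ((Prod.snd : (Fin np → X) × (Fin nu → X) → (Fin nu → X)) ⁻¹' A2 p.1 p.2)ᶜ)
      ≤ ENNReal.ofReal (δ / ((C.card : ℝ) * (W.card : ℝ))) := by
    intro p hp
    obtain ⟨hp1, hp2⟩ := Finset.mem_product.1 hp
    have key1 : Q (((Prod.fst : (Fin np → X) × (Fin nu → X) → (Fin np → X)) ⁻¹' A1 p.1 p.2)ᶜ)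
        ≤ ENNReal.ofReal (δ / (2 * ((C.card : ℝ) * (W.card : ℝ)))) := by
      have hpre : ((Prod.fst : (Fin np → X) × (Fin nu → X) → (Fin np → X)) ⁻¹' A1 p.1 p.2)ᶜ
          = (Prod.fst : (Fin np → X) × (Fin nu → X) → (Fin np → X)) ⁻¹' ((A1 p.1 p.2)ᶜ) := rfl
      rw [hpre, hQdef, pu_prod_fst_meas Qp Qu]
      have hAc : (A1 p.1 p.2)ᶜ = {a : Fin np → X |
          εp < |(1 / (np:ℝ)) * (∑ i, p.1 (a i) * p.2 (f (a i)))
            - ∫ x, p.1 x * p.2 (f x) ∂Pp|} :=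
        Set.ext fun a => by
          simp only [Set.mem_compl_iff, hA1def, Set.mem_setOf_eq, not_le]
      rw [hAc, hQpdef]
      refine le_trans (pu_chernoff_abs Pp hnp (hgmeas p.1 hp1 p.2 hp2)
        (hgb p.1 hp1 p.2 hp2) hεp0) ?_
      rw [hεpdef, hexp np hnp0, pu_arith1 hCcard hWcard]
    have key2 : Q (((Prod.snd : (Fin np → X) × (Fin nu → X) → (Fin nu → X)) ⁻¹' A2 p.1 p.2)ᶜ)
        ≤ ENNReal.ofReal (δ / (2 * ((C.card : ℝ) * (W.card : ℝ)))) := by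
      have hpre : ((Prod.snd : (Fin np → X) × (Fin nu → X) → (Fin nu → X)) ⁻¹' A2 p.1 p.2)ᶜ
          = (Prod.snd : (Fin np → X) × (Fin nu → X) → (Fin nu → X)) ⁻¹' ((A2 p.1 p.2)ᶜ) := rfl
      rw [hpre, hQdef, pu_prod_snd_meas Qp Qu]
      have hAc : (A2 p.1 p.2)ᶜ = {b : Fin nu → X |
          εu < |(1 / (nu:ℝ)) * (∑ j, p.1 (b j) * p.2 (f (b j)) * f (b j))
            - ∫ x, p.1 x * p.2 (f x) * f x ∂Pu|} :=
        Set.ext fun b => by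
          simp only [Set.mem_compl_iff, hA2def, Set.mem_setOf_eq, not_le]
      rw [hAc, hQudef]
      refine le_trans (pu_chernoff_abs Pu hnu (hhmeas p.1 hp1 p.2 hp2)
        (hhb p.1 hp1 p.2 hp2) hεu0) ?_
      rw [hεudef, hexp nu hnu0, pu_arith1 hCcard hWcard]
    refine le_trans (measure_union_le _ _) ?_
    refine le_trans (add_le_add key1 key2) ?_
    rw [pu_arith2 hCcard hWcard hδ0.le]
  have hcompl : Q Gᶜ ≤ ENNReal.ofReal δ := by
    have hGc : Gᶜ = ⋃ p ∈ (C ×ˢ W : Finset ((X → ℝ) × (ℝ → ℝ))),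
        (((Prod.fst : (Fin np → X) × (Fin nu → X) → (Fin np → X)) ⁻¹' A1 p.1 p.2)ᶜ
          ∪ ((Prod.snd : (Fin np → X) × (Fin nu → X) → (Fin nu → X)) ⁻¹' A2 p.1 p.2)ᶜ) := by
      rw [hGdef, Set.compl_iInter₂]
      simp only [Set.compl_inter]
    rw [hGc]
    refine le_trans (pu_union_sum Q (C ×ˢ W) _ _ hbound) ?_
    rw [Finset.card_product]
    rw [pu_arith3 hCne.card_pos hWne.card_pos hδ0.le]
  -- inclusion in the target event
  have hsub : ∀ s, s ∈ G →
      ((∀ c ∈ C, ∀ w ∈ W,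
          |(pip / np * ∑ i, c (s.1 i) * w (f (s.1 i))
              - (1 / nu) * ∑ j, c (s.2 j) * w (f (s.2 j)) * f (s.2 j))
            - (pip * ∫ x, c x * w (f x) * (1 - f x) ∂Pp
              - (1 - pip) * ∫ x, c x * w (f x) * f x ∂Pm)|
          ≤ pip * εp + εu)
        ∧
        |((C ×ˢ W).sup' (hCne.product hWne) fun p =>
            |pip / np * ∑ i, p.1 (s.1 i) * p.2 (f (s.1 i))
              - (1 / nu) * ∑ j, p.1 (s.2 j) * p.2 (f (s.2 j)) * f (s.2 j)|)
          - ((C ×ˢ W).sup' (hCne.product hWne) fun p =>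
            |pip * ∫ x, p.1 x * p.2 (f x) * (1 - f x) ∂Pp
              - (1 - pip) * ∫ x, p.1 x * p.2 (f x) * f x ∂Pm|)|
        ≤ pip * εp + εu) := by
    intro s hs
    rw [hGdef, Set.mem_iInter₂] at hs
    have hkey : ∀ c ∈ C, ∀ w ∈ W,
        |(pip / np * ∑ i, c (s.1 i) * w (f (s.1 i))
            - (1 / nu) * ∑ j, c (s.2 j) * w (f (s.2 j)) * f (s.2 j))
          - (pip * ∫ x, c x * w (f x) * (1 - f x) ∂Pp
            - (1 - pip) * ∫ x, c x * w (f x) * f x ∂Pm)|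
        ≤ pip * εp + εu := by
      intro c hc w hw
      have hmem := hs (c, w) (Finset.mem_product.2 ⟨hc, hw⟩)
      obtain ⟨h1, h2⟩ := hmem
      rw [Set.mem_preimage] at h1 h2
      simp only [hA1def, Set.mem_setOf_eq] at h1
      simp only [hA2def, Set.mem_setOf_eq] at h2
      -- integrability
      have hIg : Integrable (fun x => c x * w (f x)) Pp :=
        pu_integrable_of_bdd Pp (hgmeas c hc w hw) (hgb c hc w hw)
      have hIhp : Integrable (fun x => c x * w (f x) * f x) Pp :=
        pu_integrable_of_bdd Pp (hhmeas c hc w hw) (hhb c hc w hw)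
      have hIhm : Integrable (fun x => c x * w (f x) * f x) Pm :=
        pu_integrable_of_bdd Pm (hhmeas c hc w hw) (hhb c hc w hw)
      have hPu_int : ∫ x, c x * w (f x) * f x ∂Pu
          = pip * ∫ x, c x * w (f x) * f x ∂Pp
            + (1 - pip) * ∫ x, c x * w (f x) * f x ∂Pm := by
        rw [hPudef, integral_add_measure
          (hIhp.smul_measure ENNReal.ofReal_ne_top)
          (hIhm.smul_measure ENNReal.ofReal_ne_top),
          integral_smul_measure, integral_smul_measure,
          ENNReal.toReal_ofReal hpi0, ENNReal.toReal_ofReal (by linarith : (0:ℝ) ≤ 1 - pip)]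
        simp [smul_eq_mul]
      have hsplit : ∫ x, c x * w (f x) * (1 - f x) ∂Pp
          = (∫ x, c x * w (f x) ∂Pp) - ∫ x, c x * w (f x) * f x ∂Pp := by
        have hptw : ∀ x, c x * w (f x) * (1 - f x)
            = c x * w (f x) - c x * w (f x) * f x := fun x => by ring
        simp_rw [hptw]
        exact integral_sub hIg hIhp
      have hpop : pip * ∫ x, c x * w (f x) * (1 - f x) ∂Pp
            - (1 - pip) * ∫ x, c x * w (f x) * f x ∂Pm
          = pip * (∫ x, c x * w (f x) ∂Pp) - ∫ x, c x * w (f x) * f x ∂Pu := by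
        rw [hsplit, hPu_int]
        ring
      have hdecomp : (pip / np * ∑ i, c (s.1 i) * w (f (s.1 i))
            - (1 / nu) * ∑ j, c (s.2 j) * w (f (s.2 j)) * f (s.2 j))
          - (pip * ∫ x, c x * w (f x) * (1 - f x) ∂Pp
            - (1 - pip) * ∫ x, c x * w (f x) * f x ∂Pm)
          = pip * ((1 / (np:ℝ)) * (∑ i, c (s.1 i) * w (f (s.1 i)))
              - ∫ x, c x * w (f x) ∂Pp)
            - ((1 / (nu:ℝ)) * (∑ j, c (s.2 j) * w (f (s.2 j)) * f (s.2 j))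
              - ∫ x, c x * w (f x) * f x ∂Pu) := by
        rw [hpop]
        ring
      rw [hdecomp]
      calc |pip * ((1 / (np:ℝ)) * (∑ i, c (s.1 i) * w (f (s.1 i)))
              - ∫ x, c x * w (f x) ∂Pp)
            - ((1 / (nu:ℝ)) * (∑ j, c (s.2 j) * w (f (s.2 j)) * f (s.2 j))
              - ∫ x, c x * w (f x) * f x ∂Pu)|
          ≤ |pip * ((1 / (np:ℝ)) * (∑ i, c (s.1 i) * w (f (s.1 i)))
              - ∫ x, c x * w (f x) ∂Pp)|
            + |(1 / (nu:ℝ)) * (∑ j, c (s.2 j) * w (f (s.2 j)) * f (s.2 j))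
              - ∫ x, c x * w (f x) * f x ∂Pu| := by
            rw [sub_eq_add_neg]
            refine le_trans (abs_add_le _ _) ?_
            rw [abs_neg]
        _ ≤ pip * εp + εu := by
            rw [abs_mul, abs_of_nonneg hpi0]
            exact add_le_add (mul_le_mul_of_nonneg_left h1 hpi0) h2
    refine ⟨hkey, ?_⟩
    apply pu_abs_sup_sub_le
    intro p hp
    obtain ⟨hp1, hp2⟩ := Finset.mem_product.1 hp
    refine le_trans (abs_abs_sub_abs_le_abs_sub _ _) ?_
    exact hkey p.1 hp1 p.2 hp2
  exact pu_one_sub_le hδ0 hδ1 Q hGmeas hsub hcompl
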